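/- Let m ≥ 3 be odd, ω = e^{2πi/m}, s = 2cos(π/m). Then |2ω^{2c} + s ω^{-2c}|^2 = 2q^6 - 11q^4 + 16q^2, where c = ⌊(m+1)/4⌋ and q = 2cos(π/(2m)). -/

import Mathlib

theorem stmt_12 (m : ℕ) (hm : 3 ≤ m) (hodd : Odd m) :
    (‖(2 * Complex.exp (2 * (Real.pi : ℂ) * Complex.I / m) ^ ((2 * ((m + 1) / 4) : ℕ) : ℤ) +
        (2 * Real.cos (Real.pi / m) : ℂ) *
          Complex.exp (2 * (Real.pi : ℂ) * Complex.I / m) ^ (-((2 * ((m + 1) / 4) : ℕ) : ℤ)))‖) ^ 2 =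
      2 * (2 * Real.cos (Real.pi / (2 * m))) ^ 6 - 11 * (2 * Real.cos (Real.pi / (2 * m))) ^ 4 +
        16 * (2 * Real.cos (Real.pi / (2 * m))) ^ 2 := by
  have hmR : (m : ℝ) ≠ 0 := Nat.cast_ne_zero.mpr (by omega)
  have hmC : (m : ℂ) ≠ 0 := Nat.cast_ne_zero.mpr (by omega)
  set c : ℕ := (m + 1) / 4 with hc
  set A : ℝ := 2 * Real.pi * (2 * c) / m with hA
  -- the power rewrites
  have hpow : ∀ n : ℤ, Complex.exp (2 * (Real.pi : ℂ) * Complex.I / m) ^ n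
      = Complex.exp ((n : ℂ) * (2 * (Real.pi : ℂ) * Complex.I / m)) := fun n =>
    (Complex.exp_int_mul _ n).symm
  have harg : ((((2 * c : ℕ) : ℤ) : ℂ)) * (2 * (Real.pi : ℂ) * Complex.I / m) = (A : ℂ) * Complex.I := by
    rw [hA]; push_cast; field_simp
  have harg' : (-(((2 * c : ℕ) : ℤ) : ℂ)) * (2 * (Real.pi : ℂ) * Complex.I / m) = ((-A : ℝ) : ℂ) * Complex.I := by
    rw [neg_mul, harg]; push_cast; ring
  have hexp : ∀ x : ℝ, Complex.exp ((x : ℂ) * Complex.I)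
      = ((Real.cos x : ℝ) : ℂ) + ((Real.sin x : ℝ) : ℂ) * Complex.I := by
    intro x
    rw [Complex.exp_mul_I, Complex.ofReal_cos, Complex.ofReal_sin]
  set s : ℝ := 2 * Real.cos (Real.pi / m) with hs
  have hz : 2 * Complex.exp (2 * (Real.pi : ℂ) * Complex.I / m) ^ ((2 * c : ℕ) : ℤ) +
        ((s : ℝ) : ℂ) *
          Complex.exp (2 * (Real.pi : ℂ) * Complex.I / m) ^ (-((2 * c : ℕ) : ℤ))
      = (((2 + s) * Real.cos A : ℝ) : ℂ) + (((2 - s) * Real.sin A : ℝ) : ℂ) * Complex.I := by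
    rw [hpow, hpow, Int.cast_neg, harg, harg', hexp, hexp, Real.cos_neg, Real.sin_neg]
    push_cast
    ring
  have habs : (‖(2 * Complex.exp (2 * (Real.pi : ℂ) * Complex.I / m) ^ ((2 * c : ℕ) : ℤ) +
        ((s : ℝ) : ℂ) *
          Complex.exp (2 * (Real.pi : ℂ) * Complex.I / m) ^ (-((2 * c : ℕ) : ℤ)))‖) ^ 2
      = ((2 + s) * Real.cos A) ^ 2 + ((2 - s) * Real.sin A) ^ 2 := by
    rw [hz, Complex.sq_norm, Complex.normSq_add_mul_I]
  have hsC : ((2 * Real.cos (Real.pi / m) : ℝ) : ℂ) = (2 : ℂ) * (Real.cos (Real.pi / m) : ℂ) := by push_cast; ring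
  rw [show ((2 : ℂ) * (Real.cos (Real.pi / m) : ℂ)) = ((s : ℝ) : ℂ) by rw [hs]; push_cast; ring]
  rw [habs]
  -- now a real identity
  set u : ℝ := Real.cos (Real.pi / (2 * m)) with hu
  have hsu : Real.cos (Real.pi / m) = 2 * u ^ 2 - 1 := by
    rw [hu, ← Real.cos_two_mul]
    congr 1
    field_simp
  -- cos (2A) = cos (2π/m)
  have h4c : (4 * c : ℕ) = m - 1 ∨ (4 * c : ℕ) = m + 1 := by
    obtain ⟨k, hk⟩ := hodd
    omega
  have h2A : Real.cos (2 * A) = Real.cos (2 * Real.pi / m) := by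
    rcases h4c with h | h
    · have hcr : (c : ℝ) = ((m : ℝ) - 1) / 4 := by
        have : ((4 * c : ℕ) : ℝ) = ((m - 1 : ℕ) : ℝ) := by rw [h]
        push_cast [Nat.cast_sub (by omega : 1 ≤ m)] at this
        linarith
      have : 2 * A = 2 * Real.pi - 2 * Real.pi / m := by
        rw [hA, hcr]; field_simp; ring
      rw [this, Real.cos_two_pi_sub]
    · have hcr : (c : ℝ) = ((m : ℝ) + 1) / 4 := by
        have : ((4 * c : ℕ) : ℝ) = ((m + 1 : ℕ) : ℝ) := by rw [h]
        push_cast at this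
        linarith
      have : 2 * A = 2 * Real.pi / m + 2 * Real.pi := by
        rw [hA, hcr]; field_simp; ring
      rw [this, Real.cos_add_two_pi]
  have hcosA : Real.cos A ^ 2 = (2 * u ^ 2 - 1) ^ 2 := by
    have h1 : Real.cos (2 * A) = 2 * Real.cos A ^ 2 - 1 := Real.cos_two_mul A
    have h2 : Real.cos (2 * Real.pi / m) = 2 * Real.cos (Real.pi / m) ^ 2 - 1 := by
      rw [show 2 * Real.pi / (m : ℝ) = 2 * (Real.pi / m) by ring, Real.cos_two_mul]
    rw [h2A, h2, hsu] at h1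
    linarith
  have hsinA : Real.sin A ^ 2 = 1 - Real.cos A ^ 2 := by
    have := Real.sin_sq_add_cos_sq A
    linarith
  rw [hs, hsu]
  rw [hu] at *
  linear_combination ((2 - 2 * (2 * Real.cos (Real.pi / (2 * m)) ^ 2 - 1)) ^ 2) * hsinA +
    (16 * (2 * Real.cos (Real.pi / (2 * m)) ^ 2 - 1)) * hcosA
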